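/- For any ξ ∈ F_q((T^{-1})) and any positive integer n, the uniform exponent satisfies ŵ_n(ξ) = ŵ_n(ξ^p), where p is the characteristic. -/

import Mathlib

open Polynomial
open scoped Classical

namespace MahlerKoksmaFq

noncomputable section

variable (Fq : Type) [Field Fq] [Fintype Fq]

/-- `K Fq` models `F_q((T⁻¹))`: Laurent series in the variable `t = T⁻¹`. -/
abbrev K := LaurentSeries Fq

/-- The element `T` (the inverse of the Laurent-series variable `t = T⁻¹`). -/
def Tvar : K Fq := HahnSeries.single (-1 : ℤ) 1

/-- The absolute value `|ξ| = q^{-ν(ξ)}` on `F_q((T⁻¹))`. -/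
def absK (ξ : K Fq) : ℝ :=
  if ξ = 0 then 0 else (Fintype.card Fq : ℝ) ^ (-(HahnSeries.order ξ))

/-- The embedding of `F_q[T]` into `F_q((T⁻¹))`, sending `T` to `Tvar`. -/
def emb : Polynomial Fq →+* K Fq :=
  Polynomial.eval₂RingHom (algebraMap Fq (K Fq)) (Tvar Fq)

/-- Evaluation of `P ∈ F_q[T][X]` at `ξ ∈ F_q((T⁻¹))`. -/
def evalK (P : Polynomial (Polynomial Fq)) (ξ : K Fq) : K Fq :=
  P.eval₂ (emb Fq) ξ

/-- Height of a polynomial over `F_q[T]`: the maximum of the absolute values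
`q^{deg c}` of its coefficients. -/
def HP (P : Polynomial (Polynomial Fq)) : ℝ :=
  (Fintype.card Fq : ℝ) ^ (P.support.sup fun i => (P.coeff i).natDegree)

/-- `ξ` is algebraic (over `F_q[T]`) of degree at most `n`. -/
def IsAlgDegLe (ξ : K Fq) (n : ℕ) : Prop :=
  ∃ P : Polynomial (Polynomial Fq), P ≠ 0 ∧ P.natDegree ≤ n ∧ evalK Fq P ξ = 0

/-- `ξ` is algebraic over `F_q[T]`. -/
def IsAlgK (ξ : K Fq) : Prop :=
  ∃ P : Polynomial (Polynomial Fq), P ≠ 0 ∧ evalK Fq P ξ = 0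

/-- The degree of an algebraic element of `F_q((T⁻¹))`. -/
def degA (α : K Fq) : ℕ :=
  sInf {d | ∃ P : Polynomial (Polynomial Fq), P ≠ 0 ∧ P.natDegree = d ∧ evalK Fq P α = 0}

/-- The height of an algebraic element `α` of `F_q((T⁻¹))`: the least height of a
 nonzero annihilating polynomial of minimal degree (= height of the minimal
 defining polynomial over `F_q[T]`). -/
def HA (α : K Fq) : ℝ :=
  sInf {h | ∃ P : Polynomial (Polynomial Fq),
    P ≠ 0 ∧ P.natDegree = degA Fq α ∧ evalK Fq P α = 0 ∧ h = HP Fq P}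

/-- The defining set for Mahler's exponent `w_n`. -/
def wnSet (ξ : K Fq) (n : ℕ) : Set ℝ :=
  {w | {P : Polynomial (Polynomial Fq) |
      P.natDegree ≤ n ∧ 0 < absK Fq (evalK Fq P ξ) ∧
      absK Fq (evalK Fq P ξ) < HP Fq P ^ (-w)}.Infinite}

/-- Mahler's exponent `w_n(ξ)`. -/
def wn (ξ : K Fq) (n : ℕ) : EReal :=
  sSup ((fun w : ℝ => (w : EReal)) '' wnSet Fq ξ n)

/-- The defining set for `w_n^{sep}` (separable polynomials only). -/
def wnsepSet (ξ : K Fq) (n : ℕ) : Set ℝ :=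
  {w | {P : Polynomial (Polynomial Fq) |
      P.Separable ∧ P.natDegree ≤ n ∧ 0 < absK Fq (evalK Fq P ξ) ∧
      absK Fq (evalK Fq P ξ) < HP Fq P ^ (-w)}.Infinite}

/-- The exponent `w_n^{sep}(ξ)`. -/
def wnsep (ξ : K Fq) (n : ℕ) : EReal :=
  sSup ((fun w : ℝ => (w : EReal)) '' wnsepSet Fq ξ n)

/-- The defining set for Koksma's exponent `w_n^*` (approximation by algebraic
elements lying in `F_q((T⁻¹))`). -/
def wnstarSet (ξ : K Fq) (n : ℕ) : Set ℝ :=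
  {w | {α : K Fq | IsAlgK Fq α ∧ degA Fq α ≤ n ∧ 0 < absK Fq (ξ - α) ∧
      absK Fq (ξ - α) < HA Fq α ^ (-w - 1)}.Infinite}

/-- Koksma's exponent `w_n^*(ξ)`. -/
def wnstar (ξ : K Fq) (n : ℕ) : EReal :=
  sSup ((fun w : ℝ => (w : EReal)) '' wnstarSet Fq ξ n)

/-- The defining set for the uniform exponent `ŵ_n`. -/
def hwnSet (ξ : K Fq) (n : ℕ) : Set ℝ :=
  {w | ∃ H0 : ℝ, ∀ H : ℝ, H0 < H → ∃ P : Polynomial (Polynomial Fq),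
      P.natDegree ≤ n ∧ HP Fq P ≤ H ∧ 0 < absK Fq (evalK Fq P ξ) ∧
      absK Fq (evalK Fq P ξ) < H ^ (-w)}

/-- The uniform exponent `ŵ_n(ξ)`. -/
def hwn (ξ : K Fq) (n : ℕ) : EReal :=
  sSup ((fun w : ℝ => (w : EReal)) '' hwnSet Fq ξ n)

/-- The defining set for the uniform exponent `ŵ_n^{sep}` (separable polynomials only). -/
def hwnsepSet (ξ : K Fq) (n : ℕ) : Set ℝ :=
  {w | ∃ H0 : ℝ, ∀ H : ℝ, H0 < H → ∃ P : Polynomial (Polynomial Fq),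
      P.Separable ∧ P.natDegree ≤ n ∧ HP Fq P ≤ H ∧ 0 < absK Fq (evalK Fq P ξ) ∧
      absK Fq (evalK Fq P ξ) < H ^ (-w)}

/-- The uniform exponent `ŵ_n^{sep}(ξ)`. -/
def hwnsep (ξ : K Fq) (n : ℕ) : EReal :=
  sSup ((fun w : ℝ => (w : EReal)) '' hwnsepSet Fq ξ n)

/-- The fractional part of a Laurent series in `T⁻¹`: the part with only
 negative powers of `T` (positive powers of the series variable `t = T⁻¹`). -/
def fracPart (η : K Fq) : K Fq :=
  { coeff := fun m => if 0 < m then η.coeff m else 0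
    isPWO_support' := η.isPWO_support'.mono (fun m hm => by
      by_cases h : 0 < m
      · simpa [Function.mem_support, h] using hm
      · simp [Function.mem_support, h] at hm) }

/-- The fractional-part norm `‖η‖ = |η - [η]|`. -/
def fracNorm (η : K Fq) : ℝ := absK Fq (fracPart Fq η)

/-- `max{‖R(T)ξ‖, …, ‖R(T)ξⁿ‖}`. -/
def maxFrac (ξ : K Fq) (n : ℕ) (R : Polynomial Fq) : ℝ :=
  sSup ((fun i => fracNorm Fq (emb Fq R * ξ ^ i)) '' Set.Icc 1 n)

/-- The defining set for the exponent of simultaneous approximation `λ_n`. -/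
def lamSet (ξ : K Fq) (n : ℕ) : Set ℝ :=
  {l | {R : Polynomial Fq | 0 < maxFrac Fq ξ n R ∧
      maxFrac Fq ξ n R < (Fintype.card Fq : ℝ) ^ (-(l * R.natDegree))}.Infinite}

/-- The exponent of simultaneous approximation `λ_n(ξ)`. -/
def lam (ξ : K Fq) (n : ℕ) : EReal :=
  sSup ((fun w : ℝ => (w : EReal)) '' lamSet Fq ξ n)

/-- The defining set for the uniform exponent `λ̂_n`. -/
def hlamSet (ξ : K Fq) (n : ℕ) : Set ℝ :=
  {l | ∃ d0 : ℕ, ∀ d : ℕ, d0 < d → ∃ R : Polynomial Fq, R.natDegree ≤ d ∧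
      0 < maxFrac Fq ξ n R ∧
      maxFrac Fq ξ n R < (Fintype.card Fq : ℝ) ^ (-(l * d))}

/-- The uniform exponent `λ̂_n(ξ)`. -/
def hlam (ξ : K Fq) (n : ℕ) : EReal :=
  sSup ((fun w : ℝ => (w : EReal)) '' hlamSet Fq ξ n)

/-- An algebraic closure of `F_q((T⁻¹))`; its algebraic elements are exactly the
algebraic elements of the completion `C_∞`. -/
abbrev Kbar := AlgebraicClosure (K Fq)

/-- The embedding of `F_q[T]` into the algebraic closure. -/
def embbar : Polynomial Fq →+* Kbar Fq :=
  (algebraMap (K Fq) (Kbar Fq)).comp (emb Fq)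

/-- Evaluation of `P ∈ F_q[T][X]` at a point of the algebraic closure. -/
def evalKbar (P : Polynomial (Polynomial Fq)) (x : Kbar Fq) : Kbar Fq :=
  P.eval₂ (embbar Fq) x

/-- The unique extension of the absolute value of `F_q((T⁻¹))` to its algebraic
closure: `|x| = |N(x)|^{1/d} = |a_0|^{1/d}` where `a_0` is the constant term and
`d` the degree of the minimal polynomial of `x` over `F_q((T⁻¹))`. -/
def absC (x : Kbar Fq) : ℝ :=
  absK Fq ((minpoly (K Fq) x).coeff 0) ^ ((1 : ℝ) / (minpoly (K Fq) x).natDegree)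

/-- `x ∈ C_∞` is algebraic over `F_q[T]`. -/
def IsAlgKbar (x : Kbar Fq) : Prop :=
  ∃ P : Polynomial (Polynomial Fq), P ≠ 0 ∧ evalKbar Fq P x = 0

/-- Degree over `F_q[T]` of an algebraic element of `C_∞`. -/
def degAbar (x : Kbar Fq) : ℕ :=
  sInf {d | ∃ P : Polynomial (Polynomial Fq), P ≠ 0 ∧ P.natDegree = d ∧ evalKbar Fq P x = 0}

/-- Height of an algebraic element of `C_∞`. -/
def HAbar (x : Kbar Fq) : ℝ :=
  sInf {h | ∃ P : Polynomial (Polynomial Fq),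
    P ≠ 0 ∧ P.natDegree = degAbar Fq x ∧ evalKbar Fq P x = 0 ∧ h = HP Fq P}

/-- The defining set for the exponent `w_n^@` (approximation by algebraic
elements of `C_∞`). -/
def wnAtSet (ξ : K Fq) (n : ℕ) : Set ℝ :=
  {w | {α : Kbar Fq | IsAlgKbar Fq α ∧ degAbar Fq α ≤ n ∧
      0 < absC Fq (algebraMap (K Fq) (Kbar Fq) ξ - α) ∧
      absC Fq (algebraMap (K Fq) (Kbar Fq) ξ - α) < HAbar Fq α ^ (-w - 1)}.Infinite}

/-- The exponent `w_n^@(ξ)`. -/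
def wnAt (ξ : K Fq) (n : ℕ) : EReal :=
  sSup ((fun w : ℝ => (w : EReal)) '' wnAtSet Fq ξ n)

/-- The defining set for the uniform exponent `ŵ_n^@`. -/
def hwnAtSet (ξ : K Fq) (n : ℕ) : Set ℝ :=
  {w | ∃ H0 : ℝ, ∀ H : ℝ, H0 < H → ∃ α : Kbar Fq, IsAlgKbar Fq α ∧ degAbar Fq α ≤ n ∧
      HAbar Fq α ≤ H ∧ 0 < absC Fq (algebraMap (K Fq) (Kbar Fq) ξ - α) ∧
      absC Fq (algebraMap (K Fq) (Kbar Fq) ξ - α) < (HAbar Fq α)⁻¹ * H ^ (-w)}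

/-- The uniform exponent `ŵ_n^@(ξ)`. -/
def hwnAt (ξ : K Fq) (n : ℕ) : EReal :=
  sSup ((fun w : ℝ => (w : EReal)) '' hwnAtSet Fq ξ n)

/-- `w(ξ) = limsup_n w_n(ξ)/n`. -/
def wlim (ξ : K Fq) : EReal :=
  Filter.atTop.limsup fun n : ℕ => wn Fq ξ n * (((n : ℝ)⁻¹ : ℝ) : EReal)

/-- `w^*(ξ) = limsup_n w_n^*(ξ)/n`. -/
def wlimstar (ξ : K Fq) : EReal :=
  Filter.atTop.limsup fun n : ℕ => wnstar Fq ξ n * (((n : ℝ)⁻¹ : ℝ) : EReal)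

/-- Height of a polynomial over `C_∞`: maximum of the absolute values of its
coefficients. -/
def HC (P : Polynomial (Kbar Fq)) : ℝ :=
  sSup ((fun i => absC Fq (P.coeff i)) '' Set.Iic P.natDegree)



section FrobAux

variable (p : ℕ) [Fact p.Prime] [CharP Fq p]


def pRoot (c : Polynomial Fq) (r : ℕ) : Polynomial Fq :=
  ∑ j ∈ Finset.range (c.natDegree + 1),
    C ((frobeniusEquiv Fq p).symm (c.coeff (p * j + r))) * X ^ j

lemma coeff_pRoot (c : Polynomial Fq) (r j : ℕ) :
    (pRoot Fq p c r).coeff j = (frobeniusEquiv Fq p).symm (c.coeff (p * j + r)) := by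
  have hp : 0 < p := (Fact.out : p.Prime).pos
  rw [pRoot, finset_sum_coeff]
  simp only [coeff_C_mul, coeff_X_pow, mul_ite, mul_one, mul_zero]
  rw [Finset.sum_ite_eq (Finset.range (c.natDegree + 1)) j
    (fun j => (frobeniusEquiv Fq p).symm (c.coeff (p * j + r)))]
  split_ifs with h
  · rfl
  · have hj : c.natDegree < j := by
      simpa [Finset.mem_range, Nat.lt_succ_iff, not_le] using h
    have : c.natDegree < p * j + r := by nlinarith
    rw [coeff_eq_zero_of_natDegree_lt this, map_zero]

lemma pRoot_pow (c : Polynomial Fq) (r j : ℕ) :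
    ((pRoot Fq p c r) ^ p).coeff (p * j) = c.coeff (p * j + r) := by
  have hp : 0 < p := (Fact.out : p.Prime).pos
  rw [← Polynomial.map_frobenius_expand p (pRoot Fq p c r), coeff_map, Polynomial.coeff_expand hp]
  simp only [Nat.mul_div_cancel_left _ hp, dvd_mul_right, if_true]
  rw [coeff_pRoot, frobenius_def]
  have := (frobeniusEquiv Fq p).apply_symm_apply (c.coeff (p * j + r))
  rwa [frobeniusEquiv_apply, frobenius_def] at this

lemma pRoot_pow_not_dvd (c : Polynomial Fq) (r k : ℕ) (h : ¬ p ∣ k) :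
    ((pRoot Fq p c r) ^ p).coeff k = 0 := by
  have hp : 0 < p := (Fact.out : p.Prime).pos
  rw [← Polynomial.map_frobenius_expand p (pRoot Fq p c r), coeff_map, Polynomial.coeff_expand hp,
    if_neg h, map_zero]

lemma sum_pRoot (c : Polynomial Fq) :
    ∑ r ∈ Finset.range p, (pRoot Fq p c r) ^ p * X ^ r = c := by
  have hp : 0 < p := (Fact.out : p.Prime).pos
  ext m
  rw [finset_sum_coeff]
  rw [Finset.sum_eq_single (m % p)]
  · rw [coeff_mul_X_pow' _ _ m]
    rw [if_pos (Nat.mod_le m p)]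
    have hdm := Nat.div_add_mod m p
    have h1 : m - m % p = p * (m / p) := by omega
    rw [h1, pRoot_pow, hdm]
  · intro r hr hne
    rw [coeff_mul_X_pow']
    split_ifs with h
    · apply pRoot_pow_not_dvd
      intro hd
      apply hne
      simp only [Finset.mem_range] at hr
      obtain ⟨k, hk⟩ := hd
      have hm : m = p * k + r := by omega
      rw [hm, Nat.mul_add_mod, Nat.mod_eq_of_lt hr]
    · rfl
  · intro h
    exact absurd (Finset.mem_range.mpr (Nat.mod_lt m hp)) h

lemma natDegree_pRoot_le (c : Polynomial Fq) (r : ℕ) :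
    (pRoot Fq p c r).natDegree ≤ c.natDegree / p := by
  have hp : 0 < p := (Fact.out : p.Prime).pos
  rw [Polynomial.natDegree_le_iff_coeff_eq_zero]
  intro j hj
  rw [coeff_pRoot]
  have : c.natDegree < p * j + r := by
    have := (Nat.div_lt_iff_lt_mul hp).mp hj
    nlinarith
  rw [coeff_eq_zero_of_natDegree_lt this, map_zero]

lemma pRoot_zero (r : ℕ) : pRoot Fq p 0 r = 0 := by
  simp [pRoot]

lemma coeff_sum {ι : Type} (t : Finset ι) (f : ι → K Fq) (d : ℤ) :
    (∑ i ∈ t, f i).coeff d = ∑ i ∈ t, (f i).coeff d := by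
  induction t using Finset.cons_induction with
  | empty => simp
  | cons i t hi ih => rw [Finset.sum_cons, Finset.sum_cons, HahnSeries.coeff_add, ih]

lemma absK_pos {x : K Fq} (hx : x ≠ 0) : 0 < absK Fq x := by
  rw [absK, if_neg hx]
  have h0 : (0:ℝ) < (Fintype.card Fq : ℝ) := Nat.cast_pos.mpr Fintype.card_pos
  exact zpow_pos h0 _

lemma absK_nonneg (x : K Fq) : 0 ≤ absK Fq x := by
  by_cases h : x = 0
  · simp [absK, h]
  · exact (absK_pos Fq h).le

lemma absK_pow {x : K Fq} (hx : x ≠ 0) (m : ℕ) : absK Fq (x ^ m) = absK Fq x ^ m := by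
  rw [absK, absK, if_neg hx, if_neg (pow_ne_zero m hx), HahnSeries.order_pow,
    ← zpow_natCast ((Fintype.card Fq : ℝ) ^ (-x.order)) m, ← zpow_mul]
  congr 1
  push_cast [nsmul_eq_mul]
  ring

lemma Tvar_ne : Tvar Fq ≠ 0 := HahnSeries.single_ne_zero one_ne_zero

lemma order_Tvar : (Tvar Fq).order = -1 := HahnSeries.order_single one_ne_zero

lemma key_sum (y : ℕ → K Fq)
    (hs : (∑ r ∈ Finset.range p, Tvar Fq ^ r * y r ^ p) ≠ 0) :
    ∃ r, y r ≠ 0 ∧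
      absK Fq (y r) ^ p ≤ absK Fq (∑ r ∈ Finset.range p, Tvar Fq ^ r * y r ^ p) := by
  classical
  have hp : 0 < p := (Fact.out : p.Prime).pos
  have hq1 : (1:ℝ) ≤ (Fintype.card Fq : ℝ) := Nat.one_le_cast.mpr Fintype.card_pos
  set s := ∑ r ∈ Finset.range p, Tvar Fq ^ r * y r ^ p with hs_def
  set S := (Finset.range p).filter (fun r => y r ≠ 0) with hS
  have hterm0 : ∀ r, r ∉ S → r ∈ Finset.range p → Tvar Fq ^ r * y r ^ p = 0 := by
    intro r h hr
    have : y r = 0 := by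
      by_contra hy
      exact h (Finset.mem_filter.mpr ⟨hr, hy⟩)
    rw [this, zero_pow hp.ne', mul_zero]
  have hSne : S.Nonempty := by
    by_contra h
    rw [Finset.not_nonempty_iff_eq_empty] at h
    exact hs (Finset.sum_eq_zero (fun r hr => hterm0 r (by simp [h]) hr))
  obtain ⟨r0, hr0S, hmin⟩ := S.exists_min_image (fun r => (Tvar Fq ^ r * y r ^ p).order) hSne
  have hy : ∀ r ∈ S, y r ≠ 0 := fun r hr => (Finset.mem_filter.mp hr).2
  have hrlt : ∀ r ∈ S, r < p := fun r hr => Finset.mem_range.mp (Finset.mem_filter.mp hr).1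
  have hterm_ne : ∀ r ∈ S, Tvar Fq ^ r * y r ^ p ≠ 0 := fun r hr =>
    mul_ne_zero (pow_ne_zero _ (Tvar_ne Fq)) (pow_ne_zero _ (hy r hr))
  have horder : ∀ r ∈ S, (Tvar Fq ^ r * y r ^ p).order = -(r:ℤ) + (p:ℤ) * (y r).order := by
    intro r hr
    rw [HahnSeries.order_mul (pow_ne_zero _ (Tvar_ne Fq)) (pow_ne_zero _ (hy r hr)),
      HahnSeries.order_pow, HahnSeries.order_pow, order_Tvar]
    push_cast [nsmul_eq_mul]
    ring
  have hstrict : ∀ r ∈ S, r ≠ r0 →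
      (Tvar Fq ^ r0 * y r0 ^ p).order < (Tvar Fq ^ r * y r ^ p).order := by
    intro r hr hne
    rcases lt_or_eq_of_le (hmin r hr) with h | h
    · exact h
    · exfalso
      rw [horder r hr, horder r0 hr0S] at h
      have hd : (p:ℤ) ∣ ((r:ℤ) - r0) := ⟨(y r).order - (y r0).order, by linarith⟩
      have habs : |(r:ℤ) - (r0:ℤ)| < (p:ℤ) := by
        have h1 := hrlt r hr
        have h2 := hrlt r0 hr0S
        rw [abs_lt]
        constructor <;> [omega; omega]
      have := Int.eq_zero_of_abs_lt_dvd hd habs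
      apply hne
      omega
  have hcoeff : s.coeff ((Tvar Fq ^ r0 * y r0 ^ p).order)
      = (Tvar Fq ^ r0 * y r0 ^ p).coeff ((Tvar Fq ^ r0 * y r0 ^ p).order) := by
    rw [hs_def, coeff_sum]
    rw [Finset.sum_eq_single r0]
    · intro r hr hne
      by_cases hrS : r ∈ S
      · exact HahnSeries.coeff_eq_zero_of_lt_order (hstrict r hrS hne)
      · rw [hterm0 r hrS hr]; rfl
    · intro h
      exact absurd (Finset.mem_filter.mp hr0S).1 h
  have hcne : s.coeff ((Tvar Fq ^ r0 * y r0 ^ p).order) ≠ 0 := by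
    rw [hcoeff]
    exact HahnSeries.coeff_order_eq_zero.not.mpr (hterm_ne r0 hr0S)
  have hords : s.order ≤ (Tvar Fq ^ r0 * y r0 ^ p).order :=
    HahnSeries.order_le_of_coeff_ne_zero hcne
  refine ⟨r0, hy r0 hr0S, ?_⟩
  have hy0 := hy r0 hr0S
  calc absK Fq (y r0) ^ p = absK Fq (y r0 ^ p) := (absK_pow Fq hy0 p).symm
    _ = (Fintype.card Fq : ℝ) ^ (-(y r0 ^ p).order) := by
        rw [absK, if_neg (pow_ne_zero _ hy0)]
    _ ≤ (Fintype.card Fq : ℝ) ^ (-s.order) := by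
        apply zpow_le_zpow_right₀ hq1
        have h1 : (y r0 ^ p).order = (p:ℤ) * (y r0).order := by
          rw [HahnSeries.order_pow]; push_cast [nsmul_eq_mul]; ring
        have h2 := horder r0 hr0S
        have h3 : (0:ℤ) ≤ (r0:ℤ) := Int.natCast_nonneg r0
        rw [h1]
        linarith
    _ = absK Fq s := by rw [absK, if_neg hs]

lemma charPK : CharP (K Fq) p :=
  charP_of_injective_ringHom (HahnSeries.C_injective (Γ := ℤ) (R := Fq)) p

lemma emb_X : emb Fq (X : Polynomial Fq) = Tvar Fq := by
  simp [emb, Polynomial.coe_eval₂RingHom, Polynomial.eval₂_X]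

lemma evalK_map_frob (P : Polynomial (Polynomial Fq)) (ξ : K Fq) :
    evalK Fq (P.map (frobenius (Polynomial Fq) p)) (ξ ^ p) = (evalK Fq P ξ) ^ p := by
  haveI := charPK Fq p
  rw [evalK, evalK, Polynomial.eval₂_map]
  have hcomp : (emb Fq).comp (frobenius (Polynomial Fq) p)
      = (frobenius (K Fq) p).comp (emb Fq) := by
    refine RingHom.ext fun c => ?_
    simp [frobenius_def, map_pow]
  rw [hcomp, show ξ ^ p = frobenius (K Fq) p ξ from rfl,
    ← Polynomial.hom_eval₂]
  rw [frobenius_def]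

def Rr (Q : Polynomial (Polynomial Fq)) (r : ℕ) : Polynomial (Polynomial Fq) :=
  ∑ i ∈ Finset.range (Q.natDegree + 1), C (pRoot Fq p (Q.coeff i) r) * X ^ i

lemma coeff_Rr (Q : Polynomial (Polynomial Fq)) (r i : ℕ) :
    (Rr Fq p Q r).coeff i = pRoot Fq p (Q.coeff i) r := by
  rw [Rr, finset_sum_coeff]
  simp only [coeff_C_mul, coeff_X_pow, mul_ite, mul_one, mul_zero]
  rw [Finset.sum_ite_eq (Finset.range (Q.natDegree + 1)) i
    (fun i => pRoot Fq p (Q.coeff i) r)]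
  split_ifs with h
  · rfl
  · have : Q.natDegree < i := by simpa [Nat.lt_succ_iff, not_le] using h
    rw [coeff_eq_zero_of_natDegree_lt this, pRoot_zero]

lemma natDegree_Rr_le (Q : Polynomial (Polynomial Fq)) (r : ℕ) :
    (Rr Fq p Q r).natDegree ≤ Q.natDegree :=
  Polynomial.natDegree_sum_le_of_forall_le _ _ (fun i hi =>
    le_trans (natDegree_C_mul_X_pow_le _ _) (Nat.lt_succ_iff.mp (Finset.mem_range.mp hi)))

lemma Q_decomp (Q : Polynomial (Polynomial Fq)) :
    ∑ r ∈ Finset.range p,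
      C ((X : Polynomial Fq) ^ r) * (Rr Fq p Q r).map (frobenius (Polynomial Fq) p) = Q := by
  refine Polynomial.ext fun i => ?_
  rw [finset_sum_coeff]
  conv_rhs => rw [← sum_pRoot Fq p (Q.coeff i)]
  apply Finset.sum_congr rfl
  intro r _
  rw [coeff_C_mul, Polynomial.coeff_map, coeff_Rr, frobenius_def]
  ring

lemma eval_decomp (Q : Polynomial (Polynomial Fq)) (ξ : K Fq) :
    evalK Fq Q (ξ ^ p) =
      ∑ r ∈ Finset.range p, Tvar Fq ^ r * (evalK Fq (Rr Fq p Q r) ξ) ^ p := by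
  conv_lhs => rw [← Q_decomp Fq p Q]
  rw [evalK, Polynomial.eval₂_finset_sum]
  apply Finset.sum_congr rfl
  intro r _
  rw [Polynomial.eval₂_mul, Polynomial.eval₂_C]
  have h1 : Polynomial.eval₂ (emb Fq) (ξ ^ p) ((Rr Fq p Q r).map (frobenius (Polynomial Fq) p))
      = (evalK Fq (Rr Fq p Q r) ξ) ^ p := evalK_map_frob Fq p _ ξ
  rw [h1, map_pow, emb_X]

lemma HP_nonneg (P : Polynomial (Polynomial Fq)) : 0 ≤ HP Fq P := by
  rw [HP]; positivity

lemma HP_map_frob (P : Polynomial (Polynomial Fq)) :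
    HP Fq (P.map (frobenius (Polynomial Fq) p)) = HP Fq P ^ p := by
  have hp : 0 < p := (Fact.out : p.Prime).pos
  have hsupp : (P.map (frobenius (Polynomial Fq) p)).support = P.support := by
    ext i
    simp [Polynomial.mem_support_iff, Polynomial.coeff_map, frobenius_def,
      pow_eq_zero_iff hp.ne']
  have hcong : ∀ i ∈ P.support,
      ((P.map (frobenius (Polynomial Fq) p)).coeff i).natDegree
        = (P.coeff i).natDegree * p := by
    intro i _
    rw [Polynomial.coeff_map, frobenius_def, Polynomial.natDegree_pow]
    ring
  have h3 : P.support.sup (fun i => (P.coeff i).natDegree * p)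
      = (P.support.sup fun i => (P.coeff i).natDegree) * p := by
    refine (Finset.comp_sup_eq_sup_comp (fun m : ℕ => m * p) (fun a b => ?_) ?_).symm
    · rcases le_total a b with h | h
      · rw [sup_eq_right.mpr h, sup_eq_right.mpr (Nat.mul_le_mul_right p h)]
      · rw [sup_eq_left.mpr h, sup_eq_left.mpr (Nat.mul_le_mul_right p h)]
    · simp
  rw [HP, HP, hsupp, Finset.sup_congr rfl hcong, h3, pow_mul]

lemma HP_Rr_le (Q : Polynomial (Polynomial Fq)) (r : ℕ) :
    HP Fq (Rr Fq p Q r) ≤ HP Fq Q ^ ((1:ℝ)/p) := by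
  have hq1 : (1:ℝ) ≤ (Fintype.card Fq : ℝ) := Nat.one_le_cast.mpr Fintype.card_pos
  set D := Q.support.sup fun i => (Q.coeff i).natDegree with hD
  have h1 : HP Fq (Rr Fq p Q r) ≤ (Fintype.card Fq : ℝ) ^ (D / p) := by
    rw [HP]
    apply pow_le_pow_right₀ hq1
    apply Finset.sup_le
    intro i hi
    have hQi : Q.coeff i ≠ 0 := by
      intro h
      apply Polynomial.mem_support_iff.mp hi
      rw [coeff_Rr, h, pRoot_zero]
    calc ((Rr Fq p Q r).coeff i).natDegree = (pRoot Fq p (Q.coeff i) r).natDegree := by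
          rw [coeff_Rr]
      _ ≤ (Q.coeff i).natDegree / p := natDegree_pRoot_le Fq p _ r
      _ ≤ D / p := by
          rw [hD]
          exact Nat.div_le_div_right (Finset.le_sup (f := fun j => (Q.coeff j).natDegree) (Polynomial.mem_support_iff.mpr hQi))
  refine h1.trans ?_
  rw [HP, ← hD, ← Real.rpow_natCast (Fintype.card Fq : ℝ) (D / p),
    ← Real.rpow_natCast (Fintype.card Fq : ℝ) D, ← Real.rpow_mul (by positivity)]
  apply Real.rpow_le_rpow_of_exponent_le hq1
  rw [mul_one_div]
  exact Nat.cast_div_le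

end FrobAux

/-- `ŵ_n(ξ) = ŵ_n(ξ^p)`. -/
theorem hwn_frobenius (p : ℕ) [Fact p.Prime] (Fq : Type) [Field Fq] [Fintype Fq] [CharP Fq p]
    (ξ : K Fq) (n : ℕ) (hn : 1 ≤ n) :
    hwn Fq ξ n = hwn Fq (ξ ^ p) n := by
  have hp : 0 < p := (Fact.out : p.Prime).pos
  have hp' : (p:ℝ) ≠ 0 := Nat.cast_ne_zero.mpr hp.ne'
  suffices h : hwnSet Fq ξ n = hwnSet Fq (ξ ^ p) n by
    simp only [hwn, h]
  ext w
  simp only [hwnSet, Set.mem_setOf_eq]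
  constructor
  · rintro ⟨H0, h⟩
    refine ⟨(max H0 1) ^ p, fun H' hH' => ?_⟩
    have hmax1 : (1:ℝ) ≤ max H0 1 := le_max_right _ _
    have hmaxpos : (0:ℝ) < max H0 1 := lt_of_lt_of_le zero_lt_one hmax1
    have hH'pos : (0:ℝ) < H' := lt_of_le_of_lt (by positivity) hH'
    set H := H' ^ ((1:ℝ)/p) with hH_def
    have hHpos : 0 < H := Real.rpow_pos_of_pos hH'pos _
    have hH0H : H0 < H := by
      have h1 : ((max H0 1) ^ p) ^ ((1:ℝ)/p) < H :=
        Real.rpow_lt_rpow (by positivity) hH' (by positivity)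
      have h2 : ((max H0 1 : ℝ) ^ p) ^ ((1:ℝ)/p) = max H0 1 := by
        rw [← Real.rpow_natCast (max H0 1) p, ← Real.rpow_mul hmaxpos.le,
          mul_one_div, div_self hp', Real.rpow_one]
      exact lt_of_le_of_lt (le_max_left _ _) (h2 ▸ h1)
    obtain ⟨P, hdeg, hHP, hpos, hlt⟩ := h H hH0H
    have hPne : evalK Fq P ξ ≠ 0 := by
      intro h0
      rw [h0] at hpos
      simp [absK] at hpos
    have hHp : (H:ℝ) ^ p = H' := by
      rw [hH_def, ← Real.rpow_natCast (H' ^ ((1:ℝ)/p)) p, ← Real.rpow_mul hH'pos.le,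
        one_div_mul_cancel hp', Real.rpow_one]
    refine ⟨P.map (frobenius (Polynomial Fq) p),
      le_trans Polynomial.natDegree_map_le hdeg, ?_, ?_, ?_⟩
    · rw [HP_map_frob]
      calc HP Fq P ^ p ≤ H ^ p := pow_le_pow_left₀ (HP_nonneg Fq P) hHP p
        _ = H' := hHp
    · rw [evalK_map_frob, absK_pow Fq hPne]
      exact pow_pos hpos p
    · rw [evalK_map_frob, absK_pow Fq hPne]
      have hHw : (H ^ (-w)) ^ p = H' ^ (-w) := by
        rw [hH_def, ← Real.rpow_natCast ((H' ^ ((1:ℝ)/p)) ^ (-w)) p,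
          ← Real.rpow_mul (Real.rpow_pos_of_pos hH'pos _).le,
          ← Real.rpow_mul hH'pos.le]
        congr 1
        field_simp
      calc absK Fq (evalK Fq P ξ) ^ p < (H ^ (-w)) ^ p :=
            pow_lt_pow_left₀ hlt (absK_nonneg Fq _) hp.ne'
        _ = H' ^ (-w) := hHw
  · rintro ⟨H0', h⟩
    refine ⟨max H0' 1, fun H hH => ?_⟩
    have hH1 : (1:ℝ) < H := lt_of_le_of_lt (le_max_right _ _) hH
    have hHpos : (0:ℝ) < H := lt_trans zero_lt_one hH1
    have hH' : H0' < H ^ p :=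
      lt_of_le_of_lt (le_max_left _ _) (lt_of_lt_of_le hH (le_self_pow₀ hH1.le hp.ne'))
    obtain ⟨Q, hdegQ, hHPQ, hposQ, hltQ⟩ := h (H ^ p) hH'
    have hQne : evalK Fq Q (ξ ^ p) ≠ 0 := by
      intro h0
      rw [h0] at hposQ
      simp [absK] at hposQ
    have hval := eval_decomp Fq p Q ξ
    have hsne : (∑ r ∈ Finset.range p, Tvar Fq ^ r * (evalK Fq (Rr Fq p Q r) ξ) ^ p) ≠ 0 := by
      rw [← hval]; exact hQne
    obtain ⟨r0, hy0, hle⟩ := key_sum Fq p _ hsne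
    have hpow_eq : ((H : ℝ) ^ p) ^ (-w) = (H ^ (-w)) ^ p := by
      rw [← Real.rpow_natCast H p, ← Real.rpow_mul hHpos.le,
        ← Real.rpow_natCast (H ^ (-w)) p, ← Real.rpow_mul hHpos.le]
      congr 1
      ring
    refine ⟨Rr Fq p Q r0, le_trans (natDegree_Rr_le Fq p Q r0) hdegQ, ?_,
      absK_pos Fq hy0, ?_⟩
    · calc HP Fq (Rr Fq p Q r0) ≤ HP Fq Q ^ ((1:ℝ)/p) := HP_Rr_le Fq p Q r0
        _ ≤ ((H:ℝ) ^ p) ^ ((1:ℝ)/p) := Real.rpow_le_rpow (HP_nonneg Fq Q) hHPQ (by positivity)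
        _ = H := by
          rw [← Real.rpow_natCast H p, ← Real.rpow_mul hHpos.le,
            mul_one_div, div_self hp', Real.rpow_one]
    · have hlt2 : absK Fq (evalK Fq (Rr Fq p Q r0) ξ) ^ p < (H ^ (-w)) ^ p := by
        calc absK Fq (evalK Fq (Rr Fq p Q r0) ξ) ^ p
            ≤ absK Fq (evalK Fq Q (ξ ^ p)) := by rw [hval]; exact hle
          _ < ((H:ℝ) ^ p) ^ (-w) := hltQ
          _ = (H ^ (-w)) ^ p := hpow_eq
      exact (pow_lt_pow_iff_left₀ (absK_nonneg Fq _) (by positivity) hp.ne').mp hlt2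

end
end MahlerKoksmaFq
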